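/- For any finite simple graph G with at least 2k vertices, the difference index satisfies D(G) ≥ δ_{2k}(G) − k + 1, where δ_{2k}(G) denotes the 2k-th smallest vertex degree of G. -/

import Mathlib

open SimpleGraph

/-- The difference index of a finite simple graph. -/
noncomputable def diffIndex {V : Type*} [Fintype V] (G : SimpleGraph V) : ℕ :=
  sInf {n | ∃ f : V → ℤ, Function.Injective f ∧
    {s : ℤ | ∃ u v, G.Adj u v ∧ s = |f u - f v|}.ncard = n}

/-- `δ_j(G)`: the `j`-th smallest vertex degree of `G` (1-indexed). -/
def nthSmallestDegree {V : Type*} [Fintype V] (G : SimpleGraph V) [DecidableRel G.Adj]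
    (j : ℕ) : ℕ :=
  ((Finset.univ.val.map fun v => G.degree v).sort (· ≤ ·)).getD (j - 1) 0

section Aux

variable {V : Type*} [Fintype V]

/-- rank is strictly monotone -/
lemma rank_lt_of_lt (f : V → ℤ) {u v : V} (h : f u < f v) :
    (Finset.univ.filter fun w => f w < f u).card <
      (Finset.univ.filter fun w => f w < f v).card := by
  classical
  have hsub : insert u (Finset.univ.filter fun w => f w < f u) ⊆
      Finset.univ.filter fun w => f w < f v := by
    intro w hw
    simp only [Finset.mem_insert, Finset.mem_filter] at hw ⊢
    rcases hw with rfl | ⟨-, hw⟩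
    · exact ⟨Finset.mem_univ _, h⟩
    · exact ⟨Finset.mem_univ _, hw.trans h⟩
  have hcard := Finset.card_le_card hsub
  rwa [Finset.card_insert_of_notMem (by simp)] at hcard

lemma rank_injective (f : V → ℤ) (hf : Function.Injective f) :
    Function.Injective (fun v => (Finset.univ.filter fun w => f w < f v).card) := by
  intro u v huv
  rcases lt_trichotomy (f u) (f v) with h | h | h
  · exact absurd huv (Nat.ne_of_lt (rank_lt_of_lt f h))
  · exact hf h
  · exact absurd huv.symm (Nat.ne_of_lt (rank_lt_of_lt f h))

lemma card_low (f : V → ℤ) (hf : Function.Injective f) (k : ℕ)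
    (hcard : k ≤ Fintype.card V) :
    k ≤ (Finset.univ.filter fun v =>
      (Finset.univ.filter fun w => f w < f v).card < k).card := by
  classical
  have hpart : (Finset.univ.filter fun v =>
        (Finset.univ.filter fun w => f w < f v).card < k).card +
      (Finset.univ.filter fun v =>
        ¬ (Finset.univ.filter fun w => f w < f v).card < k).card = Fintype.card V := by
    rw [Finset.card_filter_add_card_filter_not, Finset.card_univ]
  set r : V → ℕ := fun v => (Finset.univ.filter fun w => f w < f v).card with hr
  have hcompl : (Finset.univ.filter fun v => ¬ r v < k).card ≤ Fintype.card V - k := by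
    have hmaps : ∀ v ∈ (Finset.univ.filter fun v => ¬ r v < k), r v ∈ Finset.Ico k (Fintype.card V) := by
      intro v hv
      simp only [Finset.mem_filter, Finset.mem_univ, true_and, not_lt] at hv
      refine Finset.mem_Ico.mpr ⟨hv, ?_⟩
      have : (Finset.univ.filter fun w => f w < f v) ⊂ Finset.univ := by
        refine Finset.ssubset_univ_iff.mpr ?_
        intro h
        have := h ▸ Finset.mem_univ v
        simp at this
      simpa [Finset.card_univ] using Finset.card_lt_card this
    have := Finset.card_le_card_of_injOn r hmaps
      (fun a _ b _ hab => rank_injective f hf hab)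
    simpa [Nat.card_Ico] using this
  simp only [hr] at hcompl
  omega

lemma neg_filter_eq (f : V → ℤ) (v : V) :
    (Finset.univ.filter fun w => (-f ·) w < (-f ·) v) =
      (Finset.univ.filter fun w => f v < f w) := by
  ext w; simp

/-- The key counting bound: if some vertex `v` of degree at least `δ` has fewer
than `k` vertices with smaller label, then there are at least `δ - k + 1`
distinct differences. -/
lemma half_bound (G : SimpleGraph V) [DecidableRel G.Adj] (f : V → ℤ)
    (hf : Function.Injective f) (k δ : ℕ) (v : V) (hdeg : δ ≤ G.degree v)
    (hlow : (Finset.univ.filter fun w => f w < f v).card < k) :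
    (δ : ℤ) - k + 1 ≤ (({s : ℤ | ∃ u v, G.Adj u v ∧ s = |f u - f v|}.ncard : ℤ)) := by
  classical
  set Sfin : Finset ℤ := Finset.image (fun p : V × V => |f p.1 - f p.2|)
    (Finset.univ.filter fun p : V × V => G.Adj p.1 p.2) with hSfin
  have hset : {s : ℤ | ∃ u v, G.Adj u v ∧ s = |f u - f v|} = ↑Sfin := by
    ext s
    simp only [Set.mem_setOf_eq, hSfin, Finset.coe_image, Set.mem_image, Finset.mem_coe,
      Finset.mem_filter, Finset.mem_univ, true_and, Prod.exists]
    constructor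
    · rintro ⟨u, w, h, rfl⟩; exact ⟨u, w, h, rfl⟩
    · rintro ⟨u, w, h, rfl⟩; exact ⟨u, w, h, rfl⟩
  rw [hset, Set.ncard_coe_finset]
  set Np : Finset V := (G.neighborFinset v).filter (fun w => f v < f w) with hNp
  set Nm : Finset V := (G.neighborFinset v).filter (fun w => ¬ f v < f w) with hNm
  have hsplit : Np.card + Nm.card = G.degree v := by
    rw [hNp, hNm, Finset.card_filter_add_card_filter_not, SimpleGraph.card_neighborFinset_eq_degree]
  have hNmsub : Nm ⊆ Finset.univ.filter fun w => f w < f v := by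
    intro w hw
    simp only [hNm, Finset.mem_filter, SimpleGraph.mem_neighborFinset, not_lt] at hw
    obtain ⟨hadj, hle⟩ := hw
    have hne : f w ≠ f v := fun h => G.ne_of_adj hadj (hf h).symm
    simp only [Finset.mem_filter, Finset.mem_univ, true_and]
    exact lt_of_le_of_ne hle hne
  have hNm_lt : Nm.card < k := lt_of_le_of_lt (Finset.card_le_card hNmsub) hlow
  have hNp_card : (δ : ℤ) - k + 1 ≤ (Np.card : ℤ) := by
    have h1 : (Np.card : ℤ) + Nm.card = G.degree v := by exact_mod_cast hsplit
    have h2 : (Nm.card : ℤ) < (k : ℤ) := by exact_mod_cast hNm_lt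
    have h3 : (δ : ℤ) ≤ G.degree v := by exact_mod_cast hdeg
    linarith
  have himg : Np.image (fun w => f w - f v) ⊆ Sfin := by
    intro s hs
    simp only [Finset.mem_image, hNp, Finset.mem_filter, SimpleGraph.mem_neighborFinset] at hs
    obtain ⟨w, ⟨hadj, hlt⟩, rfl⟩ := hs
    simp only [hSfin, Finset.mem_image, Finset.mem_filter, Finset.mem_univ, true_and, Prod.exists]
    exact ⟨w, v, hadj.symm, abs_of_pos (sub_pos.mpr hlt)⟩
  have hinj : (Np.image (fun w => f w - f v)).card = Np.card := by
    apply Finset.card_image_of_injective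
    intro a b hab
    exact hf (by linarith [sub_left_injective.eq_iff.mp hab])
  calc (δ : ℤ) - k + 1 ≤ (Np.card : ℤ) := hNp_card
    _ = ((Np.image (fun w => f w - f v)).card : ℤ) := by rw [hinj]
    _ ≤ (Sfin.card : ℤ) := by exact_mod_cast Finset.card_le_card himg

lemma card_small_deg (G : SimpleGraph V) [DecidableRel G.Adj] {j : ℕ} (hj : 1 ≤ j)
    (hcard : j ≤ Fintype.card V) :
    (Finset.univ.filter fun v => G.degree v < nthSmallestDegree G j).card < j := by
  classical
  set M : Multiset ℕ := Finset.univ.val.map (fun v => G.degree v) with hM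
  set L : List ℕ := M.sort (· ≤ ·) with hL
  have hlen : L.length = Fintype.card V := by
    rw [hL, Multiset.length_sort, hM, Multiset.card_map]
    rfl
  have hidx : j - 1 < L.length := by omega
  set δ : ℕ := nthSmallestDegree G j with hδdef
  have hδ : δ = L[j-1] := by
    rw [hδdef, nthSmallestDegree, ← hM, ← hL, List.getD_eq_getElem L 0 hidx]
  have hsorted : L.Pairwise (· ≤ ·) := Multiset.pairwise_sort _ _
  have hdropge : ∀ x ∈ L.drop (j - 1), ¬ x < δ := by
    intro x hx
    obtain ⟨m, hm, rfl⟩ := List.mem_iff_getElem.mp hx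
    rw [List.getElem_drop]
    rcases Nat.eq_zero_or_pos m with rfl | hmpos
    · simp [hδ]
    · have : j - 1 < j - 1 + m := by omega
      have hr := hsorted.rel_get_of_lt (a := ⟨j-1, hidx⟩)
        (b := ⟨j-1+m, by have := hm; rw [List.length_drop] at this; omega⟩) this
      simp only [List.get_eq_getElem] at hr
      omega
  have hfilter_drop : (L.drop (j-1)).filter (fun d => decide (d < δ)) = [] := by
    rw [List.filter_eq_nil_iff]
    intro a ha
    simpa using hdropge a ha
  have hflen : (L.filter (fun d => decide (d < δ))).length ≤ j - 1 := by
    conv_lhs => rw [← List.take_append_drop (j-1) L]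
    rw [List.filter_append, hfilter_drop, List.append_nil]
    calc ((L.take (j-1)).filter _).length ≤ (L.take (j-1)).length :=
          List.length_filter_le _ _
      _ ≤ j - 1 := by simp
  have hcards : (Finset.univ.filter fun v => G.degree v < δ).card
      = (L.filter (fun d => decide (d < δ))).length := by
    have h1 : (Finset.univ.filter fun v => G.degree v < δ).card
        = Multiset.card (Multiset.filter (fun d => d < δ) M) := by
      rw [hM, Multiset.filter_map, Multiset.card_map]
      rw [Finset.card_def, Finset.filter_val]
      rfl
    rw [h1, ← Multiset.sort_eq M (· ≤ ·), ← hL, Multiset.filter_coe]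
    simp
  omega

end Aux

/-- For any graph `G` with at least `2k` vertices,
`D(G) ≥ δ_{2k}(G) - k + 1`. -/
theorem stmt5 {V : Type*} [Fintype V] (G : SimpleGraph V) [DecidableRel G.Adj]
    (k : ℕ) (hk : 1 ≤ k) (hcard : 2 * k ≤ Fintype.card V) :
    (nthSmallestDegree G (2 * k) : ℤ) - k + 1 ≤ (diffIndex G : ℤ) := by
  classical
  -- the defining set of diffIndex is nonempty
  set T : Set ℕ := {n | ∃ f : V → ℤ, Function.Injective f ∧
    {s : ℤ | ∃ u v, G.Adj u v ∧ s = |f u - f v|}.ncard = n} with hT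
  have hTne : T.Nonempty := by
    refine ⟨_, fun v => ((Fintype.equivFin V v : ℕ) : ℤ), ?_, rfl⟩
    intro a b hab
    have hab' : ((Fintype.equivFin V a : ℕ) : ℤ) = ((Fintype.equivFin V b : ℕ) : ℤ) := hab
    exact (Fintype.equivFin V).injective (Fin.ext (by exact_mod_cast hab'))
  obtain ⟨f, hf, hfval⟩ := Nat.sInf_mem hTne
  have hfval' : {s : ℤ | ∃ u v, G.Adj u v ∧ s = |f u - f v|}.ncard = diffIndex G := hfval
  rw [← hfval']
  set δ : ℕ := nthSmallestDegree G (2 * k) with hδ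
  -- find a good vertex
  set A : Finset V := Finset.univ.filter fun v =>
    (Finset.univ.filter fun w => f w < f v).card < k with hA
  set B : Finset V := Finset.univ.filter fun v =>
    (Finset.univ.filter fun w => f v < f w).card < k with hB
  have hAcard : k ≤ A.card := card_low f hf k (by omega)
  have hBcard : k ≤ B.card := by
    have h := card_low (fun v => -(f v)) (fun a b hab => hf (neg_injective hab)) k (by omega)
    have hinner : ∀ v : V, (Finset.univ.filter fun w => -(f w) < -(f v)) =
        (Finset.univ.filter fun w => f v < f w) := fun v => by ext w; simp
    simp only [hinner] at h
    exact h
  have hdisj : Disjoint A B := by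
    rw [Finset.disjoint_left]
    intro v hvA hvB
    simp only [hA, hB, Finset.mem_filter, Finset.mem_univ, true_and] at hvA hvB
    have hsub : (Finset.univ : Finset V) ⊆
        insert v ((Finset.univ.filter fun w => f w < f v) ∪
          (Finset.univ.filter fun w => f v < f w)) := by
      intro w _
      rcases lt_trichotomy (f w) (f v) with h | h | h
      · exact Finset.mem_insert_of_mem (Finset.mem_union_left _ (by simp [h]))
      · exact Finset.mem_insert.mpr (Or.inl (hf h))
      · exact Finset.mem_insert_of_mem (Finset.mem_union_right _ (by simp [h]))
    have := Finset.card_le_card hsub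
    have hins := Finset.card_insert_le v ((Finset.univ.filter fun w => f w < f v) ∪
          (Finset.univ.filter fun w => f v < f w))
    have huni := Finset.card_union_le (Finset.univ.filter fun w => f w < f v)
          (Finset.univ.filter fun w => f v < f w)
    rw [Finset.card_univ] at this
    omega
  have hABcard : 2 * k ≤ (A ∪ B).card := by
    rw [Finset.card_union_of_disjoint hdisj]; omega
  have hsmall := card_small_deg G (j := 2 * k) (by omega) hcard
  rw [← hδ] at hsmall
  have hex : ∃ v ∈ A ∪ B, δ ≤ G.degree v := by
    by_contra hcon
    push_neg at hcon
    have hsub : A ∪ B ⊆ Finset.univ.filter fun v => G.degree v < δ := by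
      intro v hv
      simp only [Finset.mem_filter, Finset.mem_univ, true_and]
      exact hcon v hv
    have := Finset.card_le_card hsub
    omega
  obtain ⟨v, hvAB, hvdeg⟩ := hex
  rcases Finset.mem_union.mp hvAB with hvA | hvB
  · simp only [hA, Finset.mem_filter, Finset.mem_univ, true_and] at hvA
    exact half_bound G f hf k δ v hvdeg hvA
  · simp only [hB, Finset.mem_filter, Finset.mem_univ, true_and] at hvB
    have hneg : Function.Injective (fun v => -(f v)) :=
      fun a b hab => hf (neg_injective hab)
    have hb := half_bound G (fun v => -(f v)) hneg k δ v hvdeg (by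
      have : (Finset.univ.filter fun w => -(f w) < -(f v)) =
          (Finset.univ.filter fun w => f v < f w) := by ext w; simp
      rw [this]; exact hvB)
    have hseteq : {s : ℤ | ∃ u v, G.Adj u v ∧ s = |(-(f u)) - (-(f v))|} =
        {s : ℤ | ∃ u v, G.Adj u v ∧ s = |f u - f v|} := by
      ext s
      constructor
      · rintro ⟨u, w, h, rfl⟩
        exact ⟨u, w, h, by rw [show -(f u) - -(f w) = f w - f u by ring, abs_sub_comm]⟩
      · rintro ⟨u, w, h, rfl⟩
        exact ⟨u, w, h, by rw [show -(f u) - -(f w) = f w - f u by ring, abs_sub_comm]⟩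
    rw [hseteq] at hb
    exact hb
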